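/- Let σ_1² ≥ σ_2² ≥ ⋯ ≥ σ_N² > 0 and C > 0. For a nonempty subset S ⊆ {1,…,N}, define λ_S = 2 e^{−2C/|S|} (∏_{k∈S} σ_k²)^{1/|S|} and D(S) = (λ_S/2)·|S| − ∑_{k∈S} σ_k². Fix m with 1 ≤ m ≤ N, and suppose that every subset S ⊆ {1,…,N} of size m satisfies the active condition λ_S < 2 min_{k∈S} σ_k². Then for every subset A ⊆ {1,…,N} of size m, D({1,…,m}) ≤ D(A); that is, the optimal active set of size m is {1,…,m}, the set of the m largest source variances. -/

import Mathlib

open BigOperators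

/-- The Lagrange multiplier λ_S = 2 e^{−2C/|S|} (∏_{k∈S} σ_k²)^{1/|S|} associated with
an active source index set S. -/
noncomputable def lamS {N : ℕ} (σ : Fin N → ℝ) (C : ℝ) (S : Finset (Fin N)) : ℝ :=
  2 * Real.exp (-2 * C / (S.card : ℝ)) * (∏ k ∈ S, σ k) ^ (1 / (S.card : ℝ))

/-- The (shifted) minimal total distortion D(S) = (λ_S/2)|S| − ∑_{k∈S} σ_k². -/
noncomputable def DS {N : ℕ} (σ : Fin N → ℝ) (C : ℝ) (S : Finset (Fin N)) : ℝ :=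
  lamS σ C S / 2 * (S.card : ℝ) - ∑ k ∈ S, σ k

lemma bern (m : ℕ) (u : ℝ) (hu : 1 ≤ u) : (m:ℝ) * (u - 1) ≤ u ^ m - 1 := by
  have h := one_add_mul_le_pow (by linarith : (-2:ℝ) ≤ u - 1) m
  have h2 : (1 + (u - 1)) = u := by ring
  rw [h2] at h; linarith

lemma swap_le {N : ℕ} (σ : Fin N → ℝ) (hσ : ∀ n, 0 < σ n) (C : ℝ) {m : ℕ} (hm : 1 ≤ m)
    (A : Finset (Fin N)) (hA : A.card = m) {i j : Fin N} (hj : j ∈ A) (hi : i ∉ A)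
    (hij : σ j ≤ σ i) (hact : lamS σ C A < 2 * σ j) :
    DS σ C (insert i (A.erase j)) ≤ DS σ C A := by
  have hi' : i ∉ A.erase j := fun h => hi (Finset.mem_of_mem_erase h)
  have hcard' : (insert i (A.erase j)).card = m := by
    rw [Finset.card_insert_of_notMem hi', Finset.card_erase_of_mem hj, hA]; omega
  set Pe : ℝ := ∏ k ∈ A.erase j, σ k with hPe
  have hPepos : 0 < Pe := Finset.prod_pos (fun k _ => hσ k)
  have hprodA : σ j * Pe = ∏ k ∈ A, σ k := Finset.mul_prod_erase A σ hj
  have hprodA' : ∏ k ∈ insert i (A.erase j), σ k = σ i * Pe := Finset.prod_insert hi'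
  have hsumA : σ j + ∑ k ∈ A.erase j, σ k = ∑ k ∈ A, σ k := Finset.add_sum_erase A σ hj
  have hsumA' : ∑ k ∈ insert i (A.erase j), σ k = σ i + ∑ k ∈ A.erase j, σ k :=
    Finset.sum_insert hi'
  set c : ℝ := Real.exp (-2 * C / (m:ℝ)) with hc
  have hcpos : 0 < c := Real.exp_pos _
  set r : ℝ := 1 / (m:ℝ) with hr
  have hm0 : (m:ℝ) ≠ 0 := by positivity
  have hrpos : 0 < r := by positivity
  have hσj := hσ j
  have hσi := hσ i
  -- rewrite DS/lamS
  rw [DS, DS, lamS, lamS, hcard', hA, hprodA', hsumA', ← hprodA, ← hsumA, ← hc, ← hr]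
  -- goal: 2*c*(σ i * Pe)^r/2 * m - (σ i + Σe) ≤ 2*c*(σ j * Pe)^r/2*m - (σ j + Σe)
  have hmul1 : (σ i * Pe) ^ r = σ i ^ r * Pe ^ r := Real.mul_rpow hσi.le hPepos.le
  have hmul2 : (σ j * Pe) ^ r = σ j ^ r * Pe ^ r := Real.mul_rpow hσj.le hPepos.le
  rw [hmul1, hmul2]
  have hact' : c * (σ j ^ r * Pe ^ r) < σ j := by
    have : lamS σ C A = 2 * c * (σ j ^ r * Pe ^ r) := by
      rw [lamS, hA, ← hprodA, ← hc, ← hr, hmul2]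
    rw [this] at hact; linarith
  -- key: c * m * Pe^r * (σi^r - σj^r) ≤ σ i - σ j
  set t : ℝ := σ i / σ j with ht
  have ht1 : 1 ≤ t := (one_le_div hσj).mpr hij
  have hsi : σ i = σ j * t := by rw [ht, mul_div_assoc', mul_div_cancel_left₀ _ hσj.ne']
  have hsir : σ i ^ r = σ j ^ r * t ^ r := by
    rw [hsi, Real.mul_rpow hσj.le (by linarith : (0:ℝ) ≤ t)]
  set u : ℝ := t ^ r with hu
  have hu1 : 1 ≤ u := Real.one_le_rpow ht1 hrpos.le
  have hum : u ^ m = t := by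
    rw [hu, ← Real.rpow_natCast (t ^ r) m, ← Real.rpow_mul (by linarith : (0:ℝ) ≤ t)]
    rw [hr]
    field_simp
    simp
  have hbern : (m:ℝ) * (u - 1) ≤ t - 1 := by
    have := bern m u hu1
    rw [hum] at this; exact this
  have key : c * Pe ^ r * σ j ^ r * (u - 1) * m ≤ σ j * (t - 1) := by
    have h1 : c * Pe ^ r * σ j ^ r * (u - 1) * m ≤ σ j * ((m:ℝ) * (u - 1)) := by
      have hu0 : 0 ≤ u - 1 := by linarith
      have h3 := mul_le_mul_of_nonneg_right hact'.le
        (mul_nonneg hu0 (by positivity : (0:ℝ) ≤ (m:ℝ)))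
      nlinarith [h3]
    have h2 : σ j * ((m:ℝ) * (u - 1)) ≤ σ j * (t - 1) :=
      mul_le_mul_of_nonneg_left hbern hσj.le
    linarith
  have hfin : σ j * (t - 1) = σ i - σ j := by rw [hsi]; ring
  rw [hsir]
  nlinarith [key, hfin]

/-- If the variances are sorted in descending order and every size-m
subset satisfies the active condition λ_S < 2 min_{k∈S} σ_k², then the optimal active
set of size m is {1,…,m}: D({1,…,m}) ≤ D(A) for every subset A of size m. -/
theorem stmt_13 {N : ℕ} (σ : Fin N → ℝ) (hσ : ∀ n, 0 < σ n)
    (hsorted : ∀ i j : Fin N, i ≤ j → σ j ≤ σ i)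
    (C : ℝ) (hC : 0 < C) (m : ℕ) (hm1 : 1 ≤ m) (hmN : m ≤ N)
    (hactive : ∀ S : Finset (Fin N), S.card = m → ∀ k ∈ S, lamS σ C S < 2 * σ k) :
    ∀ A : Finset (Fin N), A.card = m →
      DS σ C (Finset.univ.filter fun k : Fin N => (k : ℕ) < m) ≤ DS σ C A := by
  set Sm : Finset (Fin N) := Finset.univ.filter fun k : Fin N => (k : ℕ) < m with hSmdef
  have hSm : Sm.card = m := by
    have heq : Sm = Finset.map ⟨Fin.castLE hmN, Fin.castLE_injective hmN⟩ Finset.univ := by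
      ext k
      simp only [hSmdef, Finset.mem_filter, Finset.mem_univ, true_and, Finset.mem_map,
        Function.Embedding.coeFn_mk]
      constructor
      · intro hk
        exact ⟨⟨(k : ℕ), hk⟩, by ext; simp [Fin.castLE]⟩
      · rintro ⟨a, -, rfl⟩
        exact a.isLt
    rw [heq, Finset.card_map, Finset.card_univ, Fintype.card_fin]
  have key : ∀ n (A : Finset (Fin N)), A.card = m → (∑ k ∈ A, (k : ℕ)) < n →
      DS σ C Sm ≤ DS σ C A := by
    intro n
    induction n with
    | zero => intro A _ h; exact absurd h (Nat.not_lt_zero _)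
    | succ n ih =>
      intro A hAc hAs
      by_cases hEq : A = Sm
      · rw [hEq]
      · have hj : ∃ j ∈ A, m ≤ (j : ℕ) := by
          by_contra h
          push_neg at h
          exact hEq (Finset.eq_of_subset_of_card_le
            (fun k hk => by simp [hSmdef, h k hk]) (by rw [hSm, hAc]))
        obtain ⟨j, hjA, hjm⟩ := hj
        have hnotsub : ¬ Sm ⊆ A := fun hsub =>
          hEq (Finset.eq_of_subset_of_card_le hsub (by rw [hSm, hAc])).symm
        obtain ⟨i, hiSm, hiA⟩ := Finset.not_subset.mp hnotsub
        have him : (i : ℕ) < m := by simpa [hSmdef] using hiSm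
        have hij : σ j ≤ σ i := hsorted i j (by omega)
        have h1 := swap_le σ hσ C hm1 A hAc hjA hiA hij (hactive A hAc j hjA)
        have hi' : i ∉ A.erase j := fun h => hiA (Finset.mem_of_mem_erase h)
        have hcard' : (insert i (A.erase j)).card = m := by
          rw [Finset.card_insert_of_notMem hi', Finset.card_erase_of_mem hjA, hAc]; omega
        have hsum1 : ∑ k ∈ insert i (A.erase j), (k : ℕ) = (i : ℕ) + ∑ k ∈ A.erase j, (k : ℕ) :=
          Finset.sum_insert hi'
        have hsum2 : (j : ℕ) + ∑ k ∈ A.erase j, (k : ℕ) = ∑ k ∈ A, (k : ℕ) :=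
          Finset.add_sum_erase A _ hjA
        exact le_trans (ih _ hcard' (by omega)) h1
  intro A hA
  exact key (∑ k ∈ A, (k : ℕ) + 1) A hA (by omega)
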